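/- The number of Deutsch paths of length 2N from (0,0) to (2N,0) equals C(3N+1, N) - 3·C(3N, N-1), which equals (1/(2N+1))·C(3N, N). -/

import Mathlib

/-- A Deutsch step: up-step 1 or a down-step -1, -3, -5, .... -/
def DeutschStep (s : ℤ) : Prop := s = 1 ∨ ∃ j : ℕ, s = -(2 * j + 1)

/-- A Deutsch path: all steps are Deutsch steps and all partial sums (heights)
are nonnegative. -/
def IsDeutschPath (p : List ℤ) : Prop :=
  (∀ s ∈ p, DeutschStep s) ∧ ∀ m : ℕ, 0 ≤ (p.take m).sum


open Finset

lemma deutschStep_le_one {s : ℤ} (h : DeutschStep s) : s ≤ 1 := by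
  rcases h with rfl | ⟨j, rfl⟩ <;> omega

lemma sum_le_length (p : List ℤ) (h : ∀ s ∈ p, s ≤ 1) : p.sum ≤ p.length := by
  induction p with
  | nil => simp
  | cons a t ih =>
      simp only [List.sum_cons, List.length_cons]
      have := h a (by simp)
      have := ih (fun s hs => h s (by simp [hs]))
      push_cast
      omega

lemma isDeutschPath_nil : IsDeutschPath [] := by
  constructor
  · simp
  · intro m; simp

lemma IsDeutschPath.sum_nonneg {p : List ℤ} (h : IsDeutschPath p) : 0 ≤ p.sum := by
  have := h.2 p.length
  simpa [List.take_length] using this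

lemma IsDeutschPath.sum_le {p : List ℤ} (h : IsDeutschPath p) : p.sum ≤ p.length :=
  sum_le_length p (fun s hs => deutschStep_le_one (h.1 s hs))

lemma isDeutschPath_concat {q : List ℤ} {s : ℤ} :
    IsDeutschPath (q ++ [s]) ↔ IsDeutschPath q ∧ DeutschStep s ∧ 0 ≤ q.sum + s := by
  constructor
  · rintro ⟨hsteps, hpre⟩
    refine ⟨⟨fun x hx => hsteps x (by simp [hx]), fun m => ?_⟩, hsteps s (by simp), ?_⟩
    · rcases le_or_gt m q.length with hm | hm
      · have := hpre m
        rwa [List.take_append_of_le_length hm] at this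
      · have := hpre m
        rw [List.take_of_length_le (le_of_lt hm)]
        have h2 := hpre q.length
        rwa [List.take_append_of_le_length le_rfl, List.take_length] at h2
    · have := hpre (q.length + 1)
      rwa [List.take_of_length_le (by simp), List.sum_append, List.sum_singleton] at this
  · rintro ⟨⟨hsteps, hpre⟩, hstep, hsum⟩
    refine ⟨?_, fun m => ?_⟩
    · intro x hx
      rcases List.mem_append.1 hx with h | h
      · exact hsteps x h
      · simp at h; subst h; exact hstep
    · rcases le_or_gt m q.length with hm | hm
      · rw [List.take_append_of_le_length hm]; exact hpre m
      · rw [List.take_of_length_le (by simp; omega), List.sum_append, List.sum_singleton]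
        exact hsum

open scoped Classical in
/-- Finset of Deutsch paths of length `n`. -/
noncomputable def DP : ℕ → Finset (List ℤ)
  | 0 => {[]}
  | n + 1 =>
      ((DP n ×ˢ Finset.Icc (-(2 * (n : ℤ) + 1)) 1).filter
          (fun q => DeutschStep q.2 ∧ 0 ≤ q.1.sum + q.2)).image
        (fun q => q.1 ++ [q.2])

lemma mem_DP {n : ℕ} {p : List ℤ} : p ∈ DP n ↔ p.length = n ∧ IsDeutschPath p := by
  classical
  induction n generalizing p with
  | zero =>
      simp only [DP, mem_singleton, List.length_eq_zero_iff]
      constructor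
      · rintro rfl; exact ⟨rfl, isDeutschPath_nil⟩
      · rintro ⟨rfl, -⟩; rfl
  | succ n ih =>
      constructor
      · intro hp
        simp only [DP, mem_image, mem_filter, mem_product] at hp
        obtain ⟨⟨q, s⟩, ⟨⟨hq, -⟩, hstep, hsum⟩, rfl⟩ := hp
        obtain ⟨hlen, hpath⟩ := ih.1 hq
        exact ⟨by simp [hlen], isDeutschPath_concat.2 ⟨hpath, hstep, hsum⟩⟩
      · rintro ⟨hlen, hpath⟩
        have hne : p ≠ [] := by intro h; simp [h] at hlen
        have hqs : p.dropLast ++ [p.getLast hne] = p := List.dropLast_append_getLast hne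
        set q := p.dropLast with hq
        set s := p.getLast hne with hs
        rw [← hqs] at hpath
        obtain ⟨hpq, hstep, hsum⟩ := isDeutschPath_concat.1 hpath
        have hql : q.length = n := by
          have := congrArg List.length hqs
          simp at this; omega
        have hqsum : q.sum ≤ (n : ℤ) := by
          have := hpq.sum_le; rwa [hql] at this
        simp only [DP, mem_image, mem_filter, mem_product]
        refine ⟨(q, s), ⟨⟨ih.2 ⟨hql, hpq⟩, ?_⟩, hstep, hsum⟩, hqs⟩
        simp only [Finset.mem_Icc]
        exact ⟨by linarith [hqsum, hsum, Int.natCast_nonneg n], deutschStep_le_one hstep⟩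

lemma mem_DP_succ {n : ℕ} {p : List ℤ} :
    p ∈ DP (n + 1) ↔ ∃ q ∈ DP n, ∃ s, DeutschStep s ∧ 0 ≤ q.sum + s ∧ p = q ++ [s] := by
  constructor
  · intro hp
    obtain ⟨hlen, hpath⟩ := mem_DP.1 hp
    have hne : p ≠ [] := by intro h; simp [h] at hlen
    have hqs : p.dropLast ++ [p.getLast hne] = p := List.dropLast_append_getLast hne
    rw [← hqs] at hpath
    obtain ⟨hpq, hstep, hsum⟩ := isDeutschPath_concat.1 hpath
    have hql : p.dropLast.length = n := by
      rw [List.length_dropLast, hlen]; omega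
    exact ⟨p.dropLast, mem_DP.2 ⟨hql, hpq⟩, p.getLast hne, hstep, hsum, hqs.symm⟩
  · rintro ⟨q, hq, s, hstep, hsum, rfl⟩
    obtain ⟨hlen, hpath⟩ := mem_DP.1 hq
    exact mem_DP.2 ⟨by simp [hlen], isDeutschPath_concat.2 ⟨hpath, hstep, hsum⟩⟩
open scoped Classical in
noncomputable def dpc (n : ℕ) (k : ℤ) : ℕ := #((DP n).filter (fun p => p.sum = k))

open scoped Classical

lemma dpc_zero (k : ℤ) : dpc 0 k = if k = 0 then 1 else 0 := by
  simp only [dpc, DP, Finset.filter_singleton, List.sum_nil]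
  rcases eq_or_ne k 0 with rfl | hk
  · simp
  · simp [Ne.symm hk, hk]

lemma dpc_zero_of_neg {n : ℕ} {k : ℤ} (hk : k < 0) : dpc n k = 0 := by
  rw [dpc, Finset.card_eq_zero, Finset.filter_eq_empty_iff]
  intro p hp hsum
  have := (mem_DP.1 hp).2.sum_nonneg
  omega

lemma dpc_zero_of_gt {n : ℕ} {k : ℤ} (hk : (n : ℤ) < k) : dpc n k = 0 := by
  rw [dpc, Finset.card_eq_zero, Finset.filter_eq_empty_iff]
  intro p hp hsum
  obtain ⟨hlen, hpath⟩ := mem_DP.1 hp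
  have := hpath.sum_le
  rw [hlen, hsum] at this
  omega

lemma deutschStep_sub_two {s : ℤ} (h : DeutschStep s) : DeutschStep (s - 2) := by
  rcases h with rfl | ⟨j, rfl⟩
  · exact Or.inr ⟨0, by norm_num⟩
  · exact Or.inr ⟨j + 1, by push_cast; ring⟩

lemma deutschStep_add_two {s : ℤ} (h : DeutschStep s) (hs : s ≠ 1) : DeutschStep (s + 2) := by
  rcases h with rfl | ⟨j, rfl⟩
  · exact absurd rfl hs
  · rcases Nat.eq_zero_or_pos j with rfl | hj
    · exact Or.inl (by norm_num)
    · exact Or.inr ⟨j - 1, by have : (1:ℕ) ≤ j := hj; push_cast [this]; ring⟩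

lemma dpc_rec (n : ℕ) (k : ℤ) (hk : 0 ≤ k) :
    dpc (n + 1) k = dpc n (k - 1) + dpc (n + 1) (k + 2) := by
  rw [dpc, ← Finset.card_filter_add_card_filter_not (fun p => p.getLastD 0 = 1)]
  congr 1
  · -- paths ending with an up-step ↔ paths of length n to k-1
    rw [dpc]
    refine Finset.card_bij' (fun p _ => p.dropLast) (fun q _ => q ++ [1]) ?_ ?_ ?_ ?_
    · intro p hp
      simp only [Finset.mem_filter] at hp
      obtain ⟨⟨hp1, hp2⟩, hp3⟩ := hp
      obtain ⟨q, hq, s, hstep, hsum, rfl⟩ := mem_DP_succ.1 hp1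
      simp only [List.getLastD_concat] at hp3
      simp only [List.dropLast_concat]
      rw [List.sum_append, List.sum_singleton] at hp2
      exact Finset.mem_filter.2 ⟨hq, by omega⟩
    · intro q hq
      simp only [Finset.mem_filter] at hq ⊢
      refine ⟨⟨mem_DP_succ.2 ⟨q, hq.1, 1, Or.inl rfl, by omega, rfl⟩, ?_⟩, List.getLastD_concat⟩
      rw [List.sum_append, List.sum_singleton, hq.2]
      ring
    · intro p hp
      simp only [Finset.mem_filter] at hp
      obtain ⟨⟨hp1, hp2⟩, hp3⟩ := hp
      obtain ⟨q, hq, s, hstep, hsum, rfl⟩ := mem_DP_succ.1 hp1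
      simp only [List.getLastD_concat] at hp3
      simp only [List.dropLast_concat, hp3]
    · intro q hq
      simp only [List.dropLast_concat]
  · -- paths ending with a down-step ↔ paths of length n+1 to k+2
    rw [dpc]
    refine Finset.card_bij' (fun p _ => p.dropLast ++ [p.getLastD 0 + 2])
      (fun p _ => p.dropLast ++ [p.getLastD 0 - 2]) ?_ ?_ ?_ ?_
    · intro p hp
      simp only [Finset.mem_filter] at hp
      obtain ⟨⟨hp1, hp2⟩, hp3⟩ := hp
      obtain ⟨q, hq, s, hstep, hsum, rfl⟩ := mem_DP_succ.1 hp1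
      simp only [List.getLastD_concat] at hp3
      simp only [List.getLastD_concat, List.dropLast_concat]
      rw [List.sum_append, List.sum_singleton] at hp2
      refine Finset.mem_filter.2 ⟨mem_DP_succ.2 ⟨q, hq, s + 2, deutschStep_add_two hstep hp3, by omega, rfl⟩, ?_⟩
      rw [List.sum_append, List.sum_singleton]; omega
    · intro p hp
      simp only [Finset.mem_filter] at hp
      obtain ⟨hp1, hp2⟩ := hp
      obtain ⟨q, hq, s, hstep, hsum, rfl⟩ := mem_DP_succ.1 hp1
      simp only [List.getLastD_concat, List.dropLast_concat]
      rw [List.sum_append, List.sum_singleton] at hp2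
      refine Finset.mem_filter.2 ⟨Finset.mem_filter.2 ⟨mem_DP_succ.2 ⟨q, hq, s - 2, deutschStep_sub_two hstep, by omega, rfl⟩, ?_⟩, ?_⟩
      · rw [List.sum_append, List.sum_singleton]; omega
      · simp only [List.getLastD_concat]
        have := deutschStep_le_one hstep
        omega
    · intro p hp
      simp only [Finset.mem_filter] at hp
      obtain ⟨⟨hp1, hp2⟩, hp3⟩ := hp
      obtain ⟨q, hq, s, hstep, hsum, rfl⟩ := mem_DP_succ.1 hp1
      simp only [List.getLastD_concat, List.dropLast_concat]
      norm_num
    · intro p hp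
      simp only [Finset.mem_filter] at hp
      obtain ⟨hp1, hp2⟩ := hp
      obtain ⟨q, hq, s, hstep, hsum, rfl⟩ := mem_DP_succ.1 hp1
      simp only [List.getLastD_concat, List.dropLast_concat]
      norm_num
/-- Closed form: number of Deutsch paths of length `n` ending at `n - 2a`. -/
def gfun (n a : ℕ) : ℤ :=
  ((n + a).choose a : ℤ) - 2 * (if a = 0 then 0 else ((n + a).choose (a - 1) : ℤ))

lemma gfun_zero (n : ℕ) : gfun n 0 = 1 := by simp [gfun]

lemma gfun_pascal (n b : ℕ) : gfun (n + 1) (b + 1) = gfun n (b + 1) + gfun (n + 1) b := by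
  cases b with
  | zero =>
      simp only [gfun, if_neg (Nat.one_ne_zero), if_pos rfl]
      norm_num [Nat.choose_one_right]
      ring
  | succ c =>
      simp only [gfun, if_neg (Nat.succ_ne_zero _)]
      have h1 : (n + 1 + (c + 2)).choose (c + 2)
          = (n + c + 2).choose (c + 1) + (n + c + 2).choose (c + 2) := by
        rw [show n + 1 + (c + 2) = (n + c + 2) + 1 from by omega]
        exact Nat.choose_succ_succ _ _
      have h2 : (n + 1 + (c + 2)).choose (c + 1)
          = (n + c + 2).choose c + (n + c + 2).choose (c + 1) := by
        rw [show n + 1 + (c + 2) = (n + c + 2) + 1 from by omega]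
        exact Nat.choose_succ_succ _ _
      rw [show c + 2 - 1 = c + 1 from rfl, show c + 1 - 1 = c from rfl, h1, h2,
        show n + (c + 2) = n + c + 2 from by omega,
        show n + 1 + (c + 1) = n + c + 2 from by omega]
      push_cast
      ring

lemma gfun_wall (a : ℕ) : gfun (2 * a + 2) (a + 1) = gfun (2 * a + 2) a := by
  cases a with
  | zero => norm_num [gfun]
  | succ b =>
      simp only [gfun, if_neg (Nat.succ_ne_zero _)]
      have h1 : (2 * (b + 1) + 2 + (b + 2)).choose (b + 2)
          = (3 * b + 5).choose (b + 1) + (3 * b + 5).choose (b + 2) := by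
        rw [show 2 * (b + 1) + 2 + (b + 2) = (3 * b + 5) + 1 from by omega]
        exact Nat.choose_succ_succ _ _
      have h2 : (2 * (b + 1) + 2 + (b + 2)).choose (b + 1)
          = (3 * b + 5).choose b + (3 * b + 5).choose (b + 1) := by
        rw [show 2 * (b + 1) + 2 + (b + 2) = (3 * b + 5) + 1 from by omega]
        exact Nat.choose_succ_succ _ _
      have h3 : (3 * b + 5).choose (b + 2) = 2 * (3 * b + 5).choose (b + 1) := by
        have h := Nat.choose_succ_right_eq (3 * b + 5) (b + 1)
        rw [show 3 * b + 5 - (b + 1) = 2 * (b + 2) from by omega] at h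
        have h' : (3 * b + 5).choose (b + 2) * (b + 2)
            = (2 * (3 * b + 5).choose (b + 1)) * (b + 2) := by
          rw [h]; ring
        exact Nat.eq_of_mul_eq_mul_right (by omega) h'
      rw [show b + 2 - 1 = b + 1 from rfl, show b + 1 - 1 = b from rfl, h1, h2,
        show 2 * (b + 1) + 2 + (b + 1) = 3 * b + 5 from by omega, h3]
      push_cast
      ring

lemma dpc_eq_gfun (n : ℕ) : ∀ a : ℕ, ∀ k : ℤ, 0 ≤ k → k + 2 * a = n → (dpc n k : ℤ) = gfun n a := by
  induction n with
  | zero =>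
      intro a k hk h
      have ha : a = 0 := by omega
      have hk0 : k = 0 := by omega
      subst ha; subst hk0
      rw [dpc_zero, if_pos rfl, gfun_zero]
      norm_num
  | succ n ihn =>
      intro a
      induction a with
      | zero =>
          intro k hk h
          have hk1 : k = (n : ℤ) + 1 := by omega
          subst hk1
          rw [dpc_rec n _ hk]
          have e1 : dpc n ((n : ℤ) + 1 - 1) = 1 := by
            have := ihn 0 n (by positivity) (by push_cast; ring)
            rw [gfun_zero] at this
            have h2 : ((n : ℤ) + 1 - 1) = (n : ℤ) := by ring
            rw [h2]
            exact_mod_cast this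
          have e2 : dpc (n + 1) ((n : ℤ) + 1 + 2) = 0 :=
            dpc_zero_of_gt (by push_cast; omega)
          rw [e1, e2, gfun_zero]
          norm_num
      | succ a iha =>
          intro k hk h
          rw [dpc_rec n k hk]
          have h2 : (dpc (n + 1) (k + 2) : ℤ) = gfun (n + 1) a :=
            iha (k + 2) (by omega) (by push_cast at h ⊢; omega)
          rcases eq_or_lt_of_le hk with hk0 | hk1
          · -- k = 0
            have hn : n = 2 * a + 1 := by omega
            have e1 : dpc n (k - 1) = 0 := dpc_zero_of_neg (by omega)
            rw [e1]
            push_cast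
            rw [h2, hn]
            rw [show 2 * a + 1 + 1 = 2 * a + 2 from rfl]
            rw [gfun_wall]
            ring
          · -- k ≥ 1
            have e1 : (dpc n (k - 1) : ℤ) = gfun n (a + 1) :=
              ihn (a + 1) (k - 1) (by omega) (by push_cast at h ⊢; omega)
            push_cast
            rw [e1, h2, gfun_pascal]

/-- Number of Deutsch paths from (0,0) to (n,k). -/
noncomputable def deutschCount (n k : ℕ) : ℕ :=
  Nat.card {p : List ℤ // p.length = n ∧ IsDeutschPath p ∧ p.sum = (k : ℤ)}


lemma deutschCount_eq_dpc (n k : ℕ) : deutschCount n k = dpc n (k : ℤ) := by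
  classical
  rw [deutschCount, dpc, ← Nat.card_eq_finsetCard]
  apply Nat.card_congr
  apply Equiv.subtypeEquivRight
  intro p
  simp only [Finset.mem_filter, mem_DP]
  tauto


/-- The number of Deutsch paths of length 2N ending at level 0 is
C(3N+1, N) - 3·C(3N, N-1), which equals (1/(2N+1))·C(3N, N). -/
theorem deutschCount_level_zero (N : ℕ) :
    (deutschCount (2 * N) 0 : ℤ) =
        ((3 * N + 1).choose N : ℤ) -
          3 * (if 1 ≤ N then ((3 * N).choose (N - 1) : ℤ) else 0) ∧
      deutschCount (2 * N) 0 * (2 * N + 1) = (3 * N).choose N := by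
  have hd : (deutschCount (2 * N) 0 : ℤ) = gfun (2 * N) N := by
    rw [deutschCount_eq_dpc]
    exact dpc_eq_gfun (2 * N) N 0 le_rfl (by push_cast; ring)
  rcases Nat.eq_zero_or_pos N with rfl | hN
  · rw [gfun_zero] at hd
    have h1 : deutschCount (2 * 0) 0 = 1 := by exact_mod_cast hd
    constructor
    · rw [h1]; norm_num
    · rw [h1]; norm_num
  · have hg : gfun (2 * N) N = ((3 * N).choose N : ℤ) - 2 * ((3 * N).choose (N - 1) : ℤ) := by
      rw [gfun, if_neg (by omega), show 2 * N + N = 3 * N from by omega]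
    rw [hg] at hd
    have hp : (3 * N + 1).choose N = (3 * N).choose (N - 1) + (3 * N).choose N := by
      have h := Nat.choose_succ_succ (3 * N) (N - 1)
      simp only [Nat.succ_eq_add_one] at h
      rwa [show N - 1 + 1 = N from by omega] at h
    have hr : (3 * N).choose N * N = (3 * N).choose (N - 1) * (2 * N + 1) := by
      have h := Nat.choose_succ_right_eq (3 * N) (N - 1)
      rwa [show N - 1 + 1 = N from by omega, show 3 * N - (N - 1) = 2 * N + 1 from by omega] at h
    constructor
    · rw [hd, if_pos (show 1 ≤ N from hN), hp]
      push_cast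
      ring
    · have : (deutschCount (2 * N) 0 * (2 * N + 1) : ℤ) = ((3 * N).choose N : ℤ) := by
        rw [hd]
        have hr' : ((3 * N).choose N : ℤ) * N = ((3 * N).choose (N - 1) : ℤ) * (2 * N + 1) := by
          exact_mod_cast hr
        linear_combination (2 : ℤ) * hr'
      exact_mod_cast this
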